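/- arXiv:2602.11557 — 2 statements merged into one kernel-verified Lean document; each statement's English description precedes it below -/
import Mathlib

section
/- Suppose ‖x_i‖_1 ≤ R for all i ∈ {1,…,n}, where R > 0. Then for every W ∈ ℝ^{k×d}, the entry-wise 1-norm of the loss gradient is sandwiched by the proxy function: γ · G(W) ≤ ‖D(W)‖_1 ≤ 2R · G(W), where γ = sup{ min_{i ∈ {1,…,n}, c ≠ y_i} (e_{y_i} − e_c)ᵀ W' x_i : W' ∈ ℝ^{k×d}, ‖W'‖_max ≤ 1 }. -/
open Finset Filter

/-- Softmax map on `ℝ^k`. -/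
noncomputable def softmax {k : ℕ} (z : Fin k → ℝ) (c : Fin k) : ℝ :=
  Real.exp (z c) / ∑ j, Real.exp (z j)

/-- Logits `W x` of a linear classifier `W : ℝ^{k×d}` on input `x : ℝ^d`. -/
noncomputable def logits {k d : ℕ} (W : Fin k → Fin d → ℝ) (x : Fin d → ℝ) : Fin k → ℝ :=
  fun c => ∑ j, W c j * x j

/-- Cross-entropy loss `L(W) = -(1/n) ∑ᵢ log S_{yᵢ}(W xᵢ)`. -/
noncomputable def lossCE {n k d : ℕ} (x : Fin n → Fin d → ℝ) (y : Fin n → Fin k)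
    (W : Fin k → Fin d → ℝ) : ℝ :=
  -((1 : ℝ) / n) * ∑ i, Real.log (softmax (logits W (x i)) (y i))

/-- Proxy function `G(W) = (1/n) ∑ᵢ (1 - S_{yᵢ}(W xᵢ))`. -/
noncomputable def proxyG {n k d : ℕ} (x : Fin n → Fin d → ℝ) (y : Fin n → Fin k)
    (W : Fin k → Fin d → ℝ) : ℝ :=
  ((1 : ℝ) / n) * ∑ i, (1 - softmax (logits W (x i)) (y i))

/-- Per-sample gradient matrix `gᵢ(W) = (S(W xᵢ) - e_{yᵢ}) xᵢᵀ`. -/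
noncomputable def sampleGrad {k d : ℕ} (x : Fin d → ℝ) (y : Fin k)
    (W : Fin k → Fin d → ℝ) : Fin k → Fin d → ℝ :=
  fun c j => (softmax (logits W x) c - (if c = y then 1 else 0)) * x j

/-- Full gradient matrix `D(W) = (1/n) ∑ᵢ gᵢ(W)`. -/
noncomputable def gradCE {n k d : ℕ} (x : Fin n → Fin d → ℝ) (y : Fin n → Fin k)
    (W : Fin k → Fin d → ℝ) : Fin k → Fin d → ℝ :=
  fun c j => ((1 : ℝ) / n) * ∑ i, sampleGrad (x i) (y i) W c j

/-- Entry-wise 1-norm of a matrix. -/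
noncomputable def norm1M {k d : ℕ} (A : Fin k → Fin d → ℝ) : ℝ :=
  ∑ c, ∑ j, |A c j|

/-- 1-norm of a vector. -/
noncomputable def norm1V {d : ℕ} (v : Fin d → ℝ) : ℝ := ∑ j, |v j|

/-- `min_{c ≠ y} (e_y - e_c)ᵀ A x`. -/
noncomputable def marginMin {k d : ℕ} (hk : 2 ≤ k) (A : Fin k → Fin d → ℝ)
    (x : Fin d → ℝ) (y : Fin k) : ℝ :=
  (Finset.univ.erase y).inf'
    (by
      obtain ⟨cne, hcne⟩ := Fintype.exists_ne_of_one_lt_card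
        (by simpa using (by omega : 1 < k)) y
      exact ⟨cne, Finset.mem_erase.mpr ⟨hcne, Finset.mem_univ _⟩⟩)
    (fun c => logits A x y - logits A x c)

/-- `min_{i ∈ [n], c ≠ yᵢ} (e_{yᵢ} - e_c)ᵀ W xᵢ`. -/
noncomputable def dataMargin {n k d : ℕ} (hn : 1 ≤ n) (hk : 2 ≤ k)
    (x : Fin n → Fin d → ℝ) (y : Fin n → Fin k) (W : Fin k → Fin d → ℝ) : ℝ :=
  Finset.univ.inf' ⟨⟨0, by omega⟩, Finset.mem_univ _⟩
    (fun i => marginMin hk W (x i) (y i))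

/-- Max margin `γ` over the max-norm unit ball. -/
noncomputable def gammaMax {n k d : ℕ} (hn : 1 ≤ n) (hk : 2 ≤ k)
    (x : Fin n → Fin d → ℝ) (y : Fin n → Fin k) : ℝ :=
  sSup { g : ℝ | ∃ W' : Fin k → Fin d → ℝ, ‖W'‖ ≤ 1 ∧ g = dataMargin hn hk x y W' }

/-- Mini-batch gradient `(1/b) ∑_{i ∈ B} gᵢ(W)`. -/
noncomputable def batchGrad {n k d : ℕ} (x : Fin n → Fin d → ℝ) (y : Fin n → Fin k)
    (B : Finset (Fin n)) (b : ℕ) (W : Fin k → Fin d → ℝ) : Fin k → Fin d → ℝ :=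
  fun c j => ((1 : ℝ) / b) * ∑ i ∈ B, sampleGrad (x i) (y i) W c j

/-- Frobenius norm of a matrix. -/
noncomputable def frobNorm {k d : ℕ} (A : Fin k → Fin d → ℝ) : ℝ :=
  Real.sqrt (∑ c, ∑ j, (A c j) ^ 2)

lemma softmax_nonneg' {k : ℕ} (z : Fin k → ℝ) (c : Fin k) : 0 ≤ softmax z c := by
  unfold softmax; positivity

lemma softmax_sum_one' {k : ℕ} (z : Fin k → ℝ) (c₀ : Fin k) :
    ∑ c, softmax z c = 1 := by
  have hpos : 0 < ∑ j, Real.exp (z j) :=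
    Finset.sum_pos (fun j _ => Real.exp_pos _) ⟨c₀, Finset.mem_univ c₀⟩
  unfold softmax
  rw [← Finset.sum_div, div_self hpos.ne']

lemma softmax_le_one' {k : ℕ} (z : Fin k → ℝ) (c : Fin k) : softmax z c ≤ 1 := by
  have h1 := softmax_sum_one' z c
  have h2 : softmax z c ≤ ∑ j, softmax z j :=
    Finset.single_le_sum (fun j _ => softmax_nonneg' z j) (Finset.mem_univ c)
  linarith

lemma sum_erase_softmax {k : ℕ} (z : Fin k → ℝ) (y : Fin k) :
    ∑ c ∈ Finset.univ.erase y, softmax z c = 1 - softmax z y := by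
  have := Finset.add_sum_erase Finset.univ (softmax z) (Finset.mem_univ y)
  have h1 := softmax_sum_one' z y
  linarith

lemma sum_abs_softmax {k : ℕ} (z : Fin k → ℝ) (y : Fin k) :
    ∑ c, |softmax z c - (if c = y then 1 else 0)| = 2 * (1 - softmax z y) := by
  rw [← Finset.add_sum_erase Finset.univ _ (Finset.mem_univ y)]
  have h1 : |softmax z y - (if y = y then 1 else 0)| = 1 - softmax z y := by
    simp [abs_of_nonpos, softmax_le_one' z y, abs_sub_comm, abs_of_nonneg,
      sub_nonneg.mpr (softmax_le_one' z y)]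
  have h2 : ∑ c ∈ Finset.univ.erase y, |softmax z c - (if c = y then 1 else 0)| =
      ∑ c ∈ Finset.univ.erase y, softmax z c := by
    apply Finset.sum_congr rfl
    intro c hc
    rw [if_neg (Finset.mem_erase.mp hc).1, sub_zero, abs_of_nonneg (softmax_nonneg' z c)]
  rw [h1, h2, sum_erase_softmax]
  ring

lemma per_sample {k d : ℕ} (hk : 2 ≤ k) (z : Fin k → ℝ) (W' : Fin k → Fin d → ℝ)
    (x : Fin d → ℝ) (y : Fin k) :
    marginMin hk W' x y * (1 - softmax z y) ≤
      ∑ c, ((if c = y then 1 else 0) - softmax z c) * logits W' x c := by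
  set v := logits W' x with hv
  set q := softmax z with hq
  have hqy := sum_erase_softmax z y
  have hid : ∑ c, ((if c = y then 1 else 0) - q c) * v c =
      ∑ c ∈ Finset.univ.erase y, q c * (v y - v c) := by
    have h1 : ∑ c, ((if c = y then 1 else 0) - q c) * v c
        = v y - ∑ c, q c * v c := by
      simp only [sub_mul, ite_mul, one_mul, zero_mul]
      rw [Finset.sum_sub_distrib, Finset.sum_ite_eq' Finset.univ y v]
      simp
    have h2 : ∑ c ∈ Finset.univ.erase y, q c * (v y - v c)
        = (1 - q y) * v y - (∑ c, q c * v c - q y * v y) := by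
      simp only [mul_sub]
      rw [Finset.sum_sub_distrib, ← Finset.sum_mul, hqy]
      congr 1
      have h3 := Finset.add_sum_erase Finset.univ (fun c => q c * v c) (Finset.mem_univ y)
      beta_reduce at h3
      linarith
    rw [h1, h2]; ring
  rw [hid]
  set m := marginMin hk W' x y with hm
  have step1 : ∑ c ∈ Finset.univ.erase y, q c * m ≤
      ∑ c ∈ Finset.univ.erase y, q c * (v y - v c) := by
    apply Finset.sum_le_sum
    intro c hc
    have hmle : m ≤ v y - v c := Finset.inf'_le _ hc
    exact mul_le_mul_of_nonneg_left hmle (softmax_nonneg' z c)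
  calc m * (1 - q y) = ∑ c ∈ Finset.univ.erase y, q c * m := by
        rw [← Finset.sum_mul, hqy]; ring
    _ ≤ _ := step1

lemma triple_swap {n k d : ℕ} (f : Fin n → Fin k → Fin d → ℝ) :
    ∑ c, ∑ j, ∑ i, f i c j = ∑ i, ∑ c, ∑ j, f i c j := by
  rw [show (∑ c, ∑ j, ∑ i, f i c j) = ∑ c, ∑ i, ∑ j, f i c j from
    Finset.sum_congr rfl (fun c _ => Finset.sum_comm)]
  exact Finset.sum_comm


/-- `γ·G(W) ≤ ‖D(W)‖₁ ≤ 2R·G(W)` under the data bound `‖xᵢ‖₁ ≤ R`. -/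
theorem grad_norm1_sandwich (n k d : ℕ) (hn : 1 ≤ n) (hk : 2 ≤ k) (hd : 1 ≤ d)
    (x : Fin n → Fin d → ℝ) (y : Fin n → Fin k)
    (R : ℝ) (hR : 0 < R) (hx : ∀ i, norm1V (x i) ≤ R)
    (W : Fin k → Fin d → ℝ) :
    gammaMax hn hk x y * proxyG x y W ≤ norm1M (gradCE x y W)
    ∧ norm1M (gradCE x y W) ≤ 2 * R * proxyG x y W := by
  have hn0 : (0:ℝ) < n := by exact_mod_cast hn
  have hinv : (0:ℝ) ≤ 1/n := by positivity
  have hfac : ∀ i, (0:ℝ) ≤ 1 - softmax (logits W (x i)) (y i) :=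
    fun i => by linarith [softmax_le_one' (logits W (x i)) (y i)]
  have hG : 0 ≤ proxyG x y W :=
    mul_nonneg hinv (Finset.sum_nonneg fun i _ => hfac i)
  have hN : 0 ≤ norm1M (gradCE x y W) :=
    Finset.sum_nonneg fun c _ => Finset.sum_nonneg fun j _ => abs_nonneg _
  constructor
  · -- lower bound
    have key : ∀ W' : Fin k → Fin d → ℝ, ‖W'‖ ≤ 1 →
        dataMargin hn hk x y W' * proxyG x y W ≤ norm1M (gradCE x y W) := by
      intro W' hW'
      have hWentry : ∀ c j, |W' c j| ≤ 1 := by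
        intro c j
        calc |W' c j| = ‖W' c j‖ := (Real.norm_eq_abs _).symm
          _ ≤ ‖W' c‖ := norm_le_pi_norm (W' c) j
          _ ≤ ‖W'‖ := norm_le_pi_norm W' c
          _ ≤ 1 := hW'
      set T : ℝ := ∑ c, ∑ j, gradCE x y W c j * (-(W' c j)) with hT
      have hT_le : T ≤ norm1M (gradCE x y W) := by
        apply Finset.sum_le_sum
        intro c _
        apply Finset.sum_le_sum
        intro j _
        calc gradCE x y W c j * (-(W' c j)) ≤ |gradCE x y W c j * (-(W' c j))| := le_abs_self _
          _ = |gradCE x y W c j| * |W' c j| := by rw [abs_mul, abs_neg]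
          _ ≤ |gradCE x y W c j| * 1 := mul_le_mul_of_nonneg_left (hWentry c j) (abs_nonneg _)
          _ = |gradCE x y W c j| := mul_one _
      have hT_eq : T = (1/(n:ℝ)) * ∑ i, ∑ c,
          ((if c = y i then 1 else 0) - softmax (logits W (x i)) c) * logits W' (x i) c := by
        rw [hT]
        simp only [gradCE, sampleGrad]
        calc ∑ c, ∑ j, ((1/(n:ℝ)) * ∑ i,
              (softmax (logits W (x i)) c - (if c = y i then 1 else 0)) * x i j) * (-(W' c j))
            = ∑ c, ∑ j, ∑ i, (1/(n:ℝ)) *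
              (((if c = y i then 1 else 0) - softmax (logits W (x i)) c) * (W' c j * x i j)) := by
              apply Finset.sum_congr rfl; intro c _
              apply Finset.sum_congr rfl; intro j _
              rw [Finset.mul_sum, Finset.sum_mul]
              apply Finset.sum_congr rfl; intro i _
              ring
          _ = ∑ i, ∑ c, ∑ j, (1/(n:ℝ)) *
              (((if c = y i then 1 else 0) - softmax (logits W (x i)) c) * (W' c j * x i j)) :=
              triple_swap _
          _ = (1/(n:ℝ)) * ∑ i, ∑ c,
              ((if c = y i then 1 else 0) - softmax (logits W (x i)) c) * logits W' (x i) c := by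
              rw [Finset.mul_sum]
              apply Finset.sum_congr rfl; intro i _
              rw [Finset.mul_sum]
              apply Finset.sum_congr rfl; intro c _
              simp only [logits]
              rw [← Finset.mul_sum, ← Finset.mul_sum]
      have hT_ge : dataMargin hn hk x y W' * proxyG x y W ≤ T := by
        rw [hT_eq]
        have step : ∀ i, dataMargin hn hk x y W' * (1 - softmax (logits W (x i)) (y i)) ≤
            ∑ c, ((if c = y i then 1 else 0) - softmax (logits W (x i)) c) * logits W' (x i) c := by
          intro i
          refine le_trans ?_ (per_sample hk (logits W (x i)) W' (x i) (y i))
          exact mul_le_mul_of_nonneg_right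
            (Finset.inf'_le _ (Finset.mem_univ i)) (hfac i)
        calc dataMargin hn hk x y W' * proxyG x y W
            = (1/(n:ℝ)) * ∑ i, dataMargin hn hk x y W' * (1 - softmax (logits W (x i)) (y i)) := by
              simp only [proxyG]
              rw [Finset.mul_sum, Finset.mul_sum]
              rw [Finset.mul_sum]
              apply Finset.sum_congr rfl; intro i _; ring
          _ ≤ _ := mul_le_mul_of_nonneg_left (Finset.sum_le_sum fun i _ => step i) hinv
      linarith
    rcases eq_or_lt_of_le hG with hG0 | hGpos
    · rw [← hG0, mul_zero]; exact hN
    · have hsup : gammaMax hn hk x y ≤ norm1M (gradCE x y W) / proxyG x y W := by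
        apply Real.sSup_le
        · rintro g ⟨W', hW', rfl⟩
          rw [le_div_iff₀ hGpos]
          exact key W' hW'
        · positivity
      calc gammaMax hn hk x y * proxyG x y W
          ≤ (norm1M (gradCE x y W) / proxyG x y W) * proxyG x y W :=
            mul_le_mul_of_nonneg_right hsup (le_of_lt hGpos)
        _ = norm1M (gradCE x y W) := div_mul_cancel₀ _ (ne_of_gt hGpos)
  · -- upper bound
    have step1 : norm1M (gradCE x y W) ≤ ∑ c, ∑ j, (1/(n:ℝ)) * ∑ i,
        |softmax (logits W (x i)) c - (if c = y i then 1 else 0)| * |x i j| := by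
      apply Finset.sum_le_sum; intro c _
      apply Finset.sum_le_sum; intro j _
      simp only [gradCE, sampleGrad]
      rw [abs_mul, abs_of_nonneg hinv]
      apply mul_le_mul_of_nonneg_left _ hinv
      refine le_trans (Finset.abs_sum_le_sum_abs _ _) ?_
      apply Finset.sum_le_sum; intro i _
      rw [abs_mul]
    have step2 : ∑ c, ∑ j, (1/(n:ℝ)) * ∑ i,
        |softmax (logits W (x i)) c - (if c = y i then 1 else 0)| * |x i j|
        = (1/(n:ℝ)) * ∑ i, (∑ c, |softmax (logits W (x i)) c - (if c = y i then 1 else 0)|)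
          * (∑ j, |x i j|) := by
      rw [show (∑ c, ∑ j, (1/(n:ℝ)) * ∑ i,
          |softmax (logits W (x i)) c - (if c = y i then 1 else 0)| * |x i j|)
        = (1/(n:ℝ)) * ∑ c, ∑ j, ∑ i,
          |softmax (logits W (x i)) c - (if c = y i then 1 else 0)| * |x i j| from by
          rw [Finset.mul_sum]; apply Finset.sum_congr rfl; intro c _
          rw [Finset.mul_sum]]
      congr 1
      rw [triple_swap]
      apply Finset.sum_congr rfl; intro i _
      rw [Finset.sum_mul]
      apply Finset.sum_congr rfl; intro c _
      rw [Finset.mul_sum]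
    have step3 : (1/(n:ℝ)) * ∑ i, (∑ c, |softmax (logits W (x i)) c - (if c = y i then 1 else 0)|)
          * (∑ j, |x i j|) ≤ 2 * R * proxyG x y W := by
      simp only [proxyG]
      rw [show 2 * R * ((1/(n:ℝ)) * ∑ i, (1 - softmax (logits W (x i)) (y i)))
        = (1/(n:ℝ)) * ∑ i, 2 * (1 - softmax (logits W (x i)) (y i)) * R from by
          rw [Finset.mul_sum, Finset.mul_sum, Finset.mul_sum]
          ring_nf
          ]
      apply mul_le_mul_of_nonneg_left _ hinv
      apply Finset.sum_le_sum; intro i _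
      rw [sum_abs_softmax]
      exact mul_le_mul_of_nonneg_left (hx i) (by linarith [hfac i])
    linarith
end

section
/- Suppose ‖x_i‖_1 ≤ R for all i ∈ {1,…,n}, where R > 0. Then for all W, W' ∈ ℝ^{k×d}, the gradient difference satisfies ‖D(W') − D(W)‖_1 ≤ (1/n)∑_{i=1}^n ‖g_i(W') − g_i(W)‖_1 ≤ 2R (exp(2R ‖W' − W‖_max) − 1) · G(W). -/
open Finset Filter

section AuxGradStability

lemma sum_exp_pos' {k : ℕ} (hk : 0 < k) (z : Fin k → ℝ) : 0 < ∑ j, Real.exp (z j) :=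
  Finset.sum_pos (fun _ _ => Real.exp_pos _) ⟨⟨0, hk⟩, Finset.mem_univ _⟩

lemma softmax_pos' {k : ℕ} (hk : 0 < k) (z : Fin k → ℝ) (c : Fin k) : 0 < softmax z c :=
  div_pos (Real.exp_pos _) (sum_exp_pos' hk z)

lemma softmax_sum' {k : ℕ} (hk : 0 < k) (z : Fin k → ℝ) : ∑ c, softmax z c = 1 := by
  unfold softmax
  rw [← Finset.sum_div, div_self (sum_exp_pos' hk z).ne']

lemma softmax_ratio' {k : ℕ} (hk : 0 < k) (z z' : Fin k → ℝ) (ε : ℝ)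
    (hε : ∀ c, |z' c - z c| ≤ ε) (c : Fin k) :
    softmax z' c ≤ Real.exp (2 * ε) * softmax z c := by
  have h1 : Real.exp (z' c) ≤ Real.exp (z c + ε) :=
    Real.exp_le_exp.2 (by have := (abs_le.1 (hε c)).2; linarith)
  have h2 : Real.exp (-ε) * ∑ j, Real.exp (z j) ≤ ∑ j, Real.exp (z' j) := by
    rw [Finset.mul_sum]
    refine Finset.sum_le_sum fun j _ => ?_
    rw [← Real.exp_add]
    exact Real.exp_le_exp.2 (by have := (abs_le.1 (hε j)).1; linarith)
  have hpos : 0 < Real.exp (-ε) * ∑ j, Real.exp (z j) :=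
    mul_pos (Real.exp_pos _) (sum_exp_pos' hk z)
  calc softmax z' c ≤ Real.exp (z c + ε) / (Real.exp (-ε) * ∑ j, Real.exp (z j)) :=
        div_le_div₀ (Real.exp_pos _).le h1 hpos h2
    _ = Real.exp (2 * ε) * softmax z c := by
        unfold softmax
        rw [eq_comm, mul_div_assoc', div_eq_div_iff (sum_exp_pos' hk z).ne' hpos.ne']
        rw [← mul_assoc, ← Real.exp_add, ← Real.exp_add]
        ring_nf

lemma softmax_abs_sub' {k : ℕ} (hk : 0 < k) (z z' : Fin k → ℝ) (ε : ℝ)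
    (hε : ∀ c, |z' c - z c| ≤ ε) (c : Fin k) :
    |softmax z' c - softmax z c| ≤ (Real.exp (2 * ε) - 1) * softmax z c := by
  have hu := softmax_ratio' hk z z' ε hε c
  have hl := softmax_ratio' hk z' z ε (fun c => by rw [abs_sub_comm]; exact hε c) c
  have hp := softmax_pos' hk z c
  have hp' := softmax_pos' hk z' c
  have hE : (0:ℝ) < Real.exp (2 * ε) := Real.exp_pos _
  have hEI : Real.exp (2*ε) + Real.exp (-(2*ε)) ≥ 2 := by
    nlinarith [Real.add_one_le_exp (2*ε), Real.add_one_le_exp (-(2*ε))]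
  rw [abs_le]
  constructor
  · have h3 : Real.exp (-(2*ε)) * softmax z c ≤ softmax z' c := by
      rw [Real.exp_neg, inv_mul_le_iff₀ hE]
      linarith [hl]
    nlinarith
  · nlinarith

lemma softmax_l1' {k : ℕ} (hk : 0 < k) (z z' : Fin k → ℝ) (ε : ℝ)
    (hε : ∀ c, |z' c - z c| ≤ ε) (y : Fin k) :
    ∑ c, |softmax z' c - softmax z c|
      ≤ 2 * (Real.exp (2 * ε) - 1) * (1 - softmax z y) := by
  have hsum := softmax_sum' hk z
  have hsum' := softmax_sum' hk z'
  have hy : softmax z y + ∑ c ∈ univ.erase y, softmax z c = 1 := by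
    rw [Finset.add_sum_erase _ _ (Finset.mem_univ y)]; exact hsum
  have hy' : softmax z' y + ∑ c ∈ univ.erase y, softmax z' c = 1 := by
    rw [Finset.add_sum_erase _ _ (Finset.mem_univ y)]; exact hsum'
  have hkey : ∀ c ∈ univ.erase y, |softmax z' c - softmax z c|
      ≤ (Real.exp (2 * ε) - 1) * softmax z c :=
    fun c _ => softmax_abs_sub' hk z z' ε hε c
  have herase : ∑ c ∈ univ.erase y, |softmax z' c - softmax z c|
      ≤ (Real.exp (2 * ε) - 1) * (1 - softmax z y) := by
    calc ∑ c ∈ univ.erase y, |softmax z' c - softmax z c|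
        ≤ ∑ c ∈ univ.erase y, (Real.exp (2 * ε) - 1) * softmax z c :=
          Finset.sum_le_sum hkey
      _ = (Real.exp (2 * ε) - 1) * (1 - softmax z y) := by
          rw [← Finset.mul_sum]; congr 1; linarith
  have hyterm : |softmax z' y - softmax z y|
      ≤ ∑ c ∈ univ.erase y, |softmax z' c - softmax z c| := by
    have heq : softmax z' y - softmax z y
        = ∑ c ∈ univ.erase y, (softmax z c - softmax z' c) := by
      rw [Finset.sum_sub_distrib]; linarith
    rw [heq]
    calc |∑ c ∈ univ.erase y, (softmax z c - softmax z' c)|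
        ≤ ∑ c ∈ univ.erase y, |softmax z c - softmax z' c| :=
          Finset.abs_sum_le_sum_abs _ _
      _ = _ := by simp_rw [abs_sub_comm]
  calc ∑ c, |softmax z' c - softmax z c|
      = |softmax z' y - softmax z y| + ∑ c ∈ univ.erase y, |softmax z' c - softmax z c| :=
        (Finset.add_sum_erase _ _ (Finset.mem_univ y)).symm
    _ ≤ 2 * (Real.exp (2 * ε) - 1) * (1 - softmax z y) := by linarith

lemma norm1V_nonneg' {d : ℕ} (v : Fin d → ℝ) : 0 ≤ norm1V v :=
  Finset.sum_nonneg fun _ _ => abs_nonneg _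

lemma sample_bound' {k d : ℕ} (hk : 0 < k) (xv : Fin d → ℝ) (yv : Fin k)
    (W W' : Fin k → Fin d → ℝ) (R : ℝ) (hR : 0 < R) (hxv : norm1V xv ≤ R) :
    norm1M (sampleGrad xv yv W' - sampleGrad xv yv W)
      ≤ 2 * R * (Real.exp (2 * R * ‖W' - W‖) - 1) * (1 - softmax (logits W xv) yv) := by
  have hD : (0:ℝ) ≤ ‖W' - W‖ := norm_nonneg _
  have hε : ∀ c, |logits W' xv c - logits W xv c| ≤ R * ‖W' - W‖ := by
    intro c
    have hcj : ∀ j, |W' c j - W c j| ≤ ‖W' - W‖ := by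
      intro j
      have h1 : ‖(W' - W) c‖ ≤ ‖W' - W‖ := norm_le_pi_norm (W' - W) c
      have h2 : ‖(W' - W) c j‖ ≤ ‖(W' - W) c‖ := norm_le_pi_norm ((W' - W) c) j
      simpa [Real.norm_eq_abs] using h2.trans h1
    have heq : logits W' xv c - logits W xv c = ∑ j, (W' c j - W c j) * xv j := by
      unfold logits
      rw [← Finset.sum_sub_distrib]
      exact Finset.sum_congr rfl fun j _ => by ring
    rw [heq]
    calc |∑ j, (W' c j - W c j) * xv j| ≤ ∑ j, |(W' c j - W c j) * xv j| :=
          Finset.abs_sum_le_sum_abs _ _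
      _ ≤ ∑ j, ‖W' - W‖ * |xv j| := by
          refine Finset.sum_le_sum fun j _ => ?_
          rw [abs_mul]
          exact mul_le_mul_of_nonneg_right (hcj j) (abs_nonneg _)
      _ = ‖W' - W‖ * norm1V xv := by rw [← Finset.mul_sum]; rfl
      _ ≤ ‖W' - W‖ * R := mul_le_mul_of_nonneg_left hxv hD
      _ = R * ‖W' - W‖ := mul_comm _ _
  have hl1 := softmax_l1' hk (logits W xv) (logits W' xv) (R * ‖W' - W‖) hε yv
  have harg : 2 * (R * ‖W' - W‖) = 2 * R * ‖W' - W‖ := by ring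
  rw [harg] at hl1
  have heq : norm1M (sampleGrad xv yv W' - sampleGrad xv yv W)
      = (∑ c, |softmax (logits W' xv) c - softmax (logits W xv) c|) * norm1V xv := by
    unfold norm1M norm1V
    rw [Finset.sum_mul]
    refine Finset.sum_congr rfl fun c _ => ?_
    rw [Finset.mul_sum]
    refine Finset.sum_congr rfl fun j _ => ?_
    simp only [Pi.sub_apply, sampleGrad]
    rw [← abs_mul]
    congr 1
    ring
  have hE1 : 1 ≤ Real.exp (2 * R * ‖W' - W‖) := Real.one_le_exp (by positivity)
  have h1S : 0 ≤ 1 - softmax (logits W xv) yv := by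
    have hy : softmax (logits W xv) yv + ∑ c ∈ univ.erase yv, softmax (logits W xv) c = 1 := by
      rw [Finset.add_sum_erase _ _ (Finset.mem_univ yv)]
      exact softmax_sum' hk _
    have hnn : 0 ≤ ∑ c ∈ univ.erase yv, softmax (logits W xv) c :=
      Finset.sum_nonneg fun c _ => (softmax_pos' hk _ c).le
    linarith
  rw [heq]
  calc (∑ c, |softmax (logits W' xv) c - softmax (logits W xv) c|) * norm1V xv
      ≤ (2 * (Real.exp (2 * R * ‖W' - W‖) - 1) * (1 - softmax (logits W xv) yv)) * R := by
        refine mul_le_mul hl1 hxv (norm1V_nonneg' _) ?_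
        have : 0 ≤ Real.exp (2 * R * ‖W' - W‖) - 1 := by linarith
        positivity
    _ = 2 * R * (Real.exp (2 * R * ‖W' - W‖) - 1) * (1 - softmax (logits W xv) yv) := by
        ring

end AuxGradStability

/-- gradient stability via the proxy function:
`‖D(W′) − D(W)‖₁ ≤ (1/n) ∑ᵢ ‖gᵢ(W′) − gᵢ(W)‖₁ ≤ 2R (exp(2R‖W′ − W‖_max) − 1) G(W)`. -/
theorem grad_stability (n k d : ℕ) (hn : 1 ≤ n) (hk : 2 ≤ k) (hd : 1 ≤ d)
    (x : Fin n → Fin d → ℝ) (y : Fin n → Fin k)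
    (R : ℝ) (hR : 0 < R) (hx : ∀ i, norm1V (x i) ≤ R)
    (W W' : Fin k → Fin d → ℝ) :
    norm1M (gradCE x y W' - gradCE x y W)
      ≤ ((1 : ℝ) / n) * ∑ i, norm1M (sampleGrad (x i) (y i) W' - sampleGrad (x i) (y i) W)
    ∧ ((1 : ℝ) / n) * ∑ i, norm1M (sampleGrad (x i) (y i) W' - sampleGrad (x i) (y i) W)
      ≤ 2 * R * (Real.exp (2 * R * ‖W' - W‖) - 1) * proxyG x y W := by
  have hkpos : 0 < k := by omega
  have h1n : (0:ℝ) ≤ 1 / n := by positivity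
  constructor
  · have key : ∀ c j, |(gradCE x y W' - gradCE x y W) c j|
        ≤ (1 / n) * ∑ i, |(sampleGrad (x i) (y i) W' - sampleGrad (x i) (y i) W) c j| := by
      intro c j
      have heq : (gradCE x y W' - gradCE x y W) c j
          = (1 / n) * ∑ i, (sampleGrad (x i) (y i) W' - sampleGrad (x i) (y i) W) c j := by
        simp only [Pi.sub_apply, gradCE]
        rw [← mul_sub, ← Finset.sum_sub_distrib]
      rw [heq, abs_mul, abs_of_nonneg h1n]
      exact mul_le_mul_of_nonneg_left (Finset.abs_sum_le_sum_abs _ _) h1n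
    calc norm1M (gradCE x y W' - gradCE x y W)
        ≤ ∑ c, ∑ j, (1 / n : ℝ)
            * ∑ i, |(sampleGrad (x i) (y i) W' - sampleGrad (x i) (y i) W) c j| := by
          unfold norm1M
          exact Finset.sum_le_sum fun c _ => Finset.sum_le_sum fun j _ => key c j
      _ = ((1:ℝ) / n) * ∑ i, norm1M (sampleGrad (x i) (y i) W' - sampleGrad (x i) (y i) W) := by
          unfold norm1M
          simp_rw [← Finset.mul_sum]
          congr 1
          exact (Finset.sum_congr rfl fun c _ => Finset.sum_comm).trans Finset.sum_comm
  · calc ((1:ℝ) / n) * ∑ i, norm1M (sampleGrad (x i) (y i) W' - sampleGrad (x i) (y i) W)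
        ≤ ((1:ℝ) / n) * ∑ i, 2 * R * (Real.exp (2 * R * ‖W' - W‖) - 1)
            * (1 - softmax (logits W (x i)) (y i)) := by
          refine mul_le_mul_of_nonneg_left (Finset.sum_le_sum fun i _ => ?_) h1n
          exact sample_bound' hkpos (x i) (y i) W W' R hR (hx i)
      _ = 2 * R * (Real.exp (2 * R * ‖W' - W‖) - 1) * proxyG x y W := by
          unfold proxyG
          rw [← Finset.mul_sum]
          ring
end
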